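/- Suppose A1 holds and F = f + ψ is bounded below. Let ε > 0, m ≥ 1 an integer, x₀ ∈ Q, and let B be a symmetric matrix with ‖B − ∇²f(x₀)‖ ≤ (√n·L/2)·h, where σ ≥ 2⁴·(2/3)^{1/3}·m·L and 0 < h ≤ [3·σ^{3/2}·ε^{3/2} / (2⁷·192·n^{3/2}·L³)]^{1/3}. Let x₁, …, x_m ∈ Q be such that for each t = 0, …, m−1, x_{t+1} satisfies M_{x_t,σ}(x_{t+1}) + ψ(x_{t+1}) ≤ F(x_t) and ‖∇M_{x_t,σ}(x_{t+1}) + ψ'(x_{t+1})‖ ≤ (σ/4)‖x_{t+1} − x_t‖² for some ψ'(x_{t+1}) ∈ ∂ψ(x_{t+1}), where in the model M_{x_t,σ} one takes g = ∇f(x_t) and the same matrix B for all t. Then either min_{1 ≤ t ≤ m} ‖∇f(x_t) + ψ'(x_t)‖ ≤ ε, or F(x₀) − F(x_m) ≥ m·ε^{3/2} / (2·192·σ^{1/2}). -/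

import Mathlib

open RealInnerProductSpace

section AuxTaylor
variable {E : Type*} [NormedAddCommGroup E] [InnerProductSpace ℝ E] [CompleteSpace E]

lemma aux_grad_contDiff {f : E → ℝ} (hf : ContDiff ℝ 2 f) : ContDiff ℝ 1 (gradient f) := by
  have h1 : ContDiff ℝ 1 (fderiv ℝ f) := hf.fderiv_right (by norm_num)
  have h2 : gradient f = fun z => (InnerProductSpace.toDual ℝ E).symm (fderiv ℝ f z) := rfl
  rw [h2]
  exact (InnerProductSpace.toDual ℝ E).symm.contDiff.comp h1

lemma aux_T1 {f : E → ℝ} {L : ℝ} (hL : 0 ≤ L) (hf : ContDiff ℝ 2 f)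
    (hLip : ∀ u v : E, ‖fderiv ℝ (gradient f) v - fderiv ℝ (gradient f) u‖ ≤ L * ‖v - u‖)
    (u v : E) :
    ‖gradient f v - gradient f u - fderiv ℝ (gradient f) u (v - u)‖ ≤ L * ‖v - u‖ ^ 2 := by
  have hdiff : Differentiable ℝ (gradient f) :=
    (aux_grad_contDiff hf).differentiable one_ne_zero
  have hb : ∀ z ∈ segment ℝ u v,
      ‖fderiv ℝ (gradient f) z - fderiv ℝ (gradient f) u‖ ≤ L * ‖v - u‖ := by
    intro z hz
    refine (hLip u z).trans (mul_le_mul_of_nonneg_left ?_ hL)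
    obtain ⟨a, b, ha, hb, hab, rfl⟩ := hz
    have hau : a = 1 - b := by linarith
    have : a • u + b • v - u = b • (v - u) := by
      rw [hau]; module
    rw [this, norm_smul, Real.norm_eq_abs, abs_of_nonneg hb]
    nlinarith [norm_nonneg (v - u)]
  have := (convex_segment u v).norm_image_sub_le_of_norm_fderiv_le'
    (fun z _ => (hdiff z)) hb (left_mem_segment ℝ u v) (right_mem_segment ℝ u v)
  calc ‖gradient f v - gradient f u - fderiv ℝ (gradient f) u (v - u)‖
      ≤ L * ‖v - u‖ * ‖v - u‖ := this
    _ = L * ‖v - u‖ ^ 2 := by ring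

lemma aux_T2 {f : E → ℝ} {L : ℝ} (hL : 0 ≤ L) (hf : ContDiff ℝ 2 f)
    (hLip : ∀ u v : E, ‖fderiv ℝ (gradient f) v - fderiv ℝ (gradient f) u‖ ≤ L * ‖v - u‖)
    (u v : E) :
    f v ≤ f u + ⟪gradient f u, v - u⟫
      + 1 / 2 * ⟪fderiv ℝ (gradient f) u (v - u), v - u⟫ + L / 3 * ‖v - u‖ ^ 3 := by
  set r : E := v - u with hr
  set a : ℝ := ⟪gradient f u, r⟫ with ha
  set b : ℝ := ⟪fderiv ℝ (gradient f) u r, r⟫ with hb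
  set c : ℝ := L * ‖r‖ ^ 3 with hc
  set q : ℝ → ℝ := fun τ => f u + τ * a + τ ^ 2 / 2 * b + τ ^ 3 / 3 * c - f (u + τ • r) with hq
  have hq' : ∀ τ : ℝ,
      HasDerivAt q (a + τ * b + τ ^ 2 * c - ⟪gradient f (u + τ • r), r⟫) τ := by
    intro τ
    have hc1 : HasDerivAt (fun s : ℝ => u + s • r) r τ := by
      simpa using ((hasDerivAt_id τ).smul_const r).const_add u
    have hfd : HasFDerivAt f (fderiv ℝ f (u + τ • r)) (u + τ • r) :=
      ((hf.differentiable two_ne_zero) (u + τ • r)).hasFDerivAt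
    have hcomp : HasDerivAt (fun s : ℝ => f (u + s • r)) ⟪gradient f (u + τ • r), r⟫ τ := by
      have := hfd.comp_hasDerivAt τ hc1
      have hg : ⟪gradient f (u + τ • r), r⟫ = fderiv ℝ f (u + τ • r) r :=
        InnerProductSpace.toDual_symm_apply
      rw [hg]; exact this
    have hpoly : HasDerivAt (fun τ : ℝ => f u + τ * a + τ ^ 2 / 2 * b + τ ^ 3 / 3 * c)
        (a + τ * b + τ ^ 2 * c) τ := by
      have h1 : HasDerivAt (fun τ : ℝ => τ * a) a τ := by
        simpa using (hasDerivAt_id τ).mul_const a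
      have h2 : HasDerivAt (fun τ : ℝ => τ ^ 2 / 2 * b) (τ * b) τ := by
        have := ((hasDerivAt_pow 2 τ).div_const 2).mul_const b
        simpa using this.congr_deriv (by ring)
      have h3 : HasDerivAt (fun τ : ℝ => τ ^ 3 / 3 * c) (τ ^ 2 * c) τ := by
        have := ((hasDerivAt_pow 3 τ).div_const 3).mul_const c
        simpa using this.congr_deriv (by ring)
      exact (((h1.const_add (f u)).add h2).add h3).congr_deriv (by ring)
    exact hpoly.sub hcomp
  have hqd : Differentiable ℝ q := fun τ => (hq' τ).differentiableAt
  have hmono : MonotoneOn q (Set.Icc (0:ℝ) 1) := by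
    apply monotoneOn_of_deriv_nonneg (convex_Icc 0 1) hqd.continuous.continuousOn
      hqd.differentiableOn
    intro τ hτ
    rw [interior_Icc] at hτ
    rw [(hq' τ).deriv]
    have hτ0 : 0 ≤ τ := le_of_lt hτ.1
    have key := aux_T1 hL hf hLip u (u + τ • r)
    rw [add_sub_cancel_left] at key
    have hnorm : ‖τ • r‖ = τ * ‖r‖ := by
      rw [norm_smul, Real.norm_eq_abs, abs_of_nonneg hτ0]
    have hin : ⟪gradient f (u + τ • r) - gradient f u - fderiv ℝ (gradient f) u (τ • r), r⟫
        ≤ L * ‖τ • r‖ ^ 2 * ‖r‖ :=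
      (real_inner_le_norm _ _).trans (mul_le_mul_of_nonneg_right key (norm_nonneg r))
    have hexp : ⟪gradient f (u + τ • r) - gradient f u - fderiv ℝ (gradient f) u (τ • r), r⟫
        = ⟪gradient f (u + τ • r), r⟫ - a - τ * b := by
      rw [inner_sub_left, inner_sub_left, (fderiv ℝ (gradient f) u).map_smul,
        real_inner_smul_left]
    rw [hexp] at hin
    rw [hnorm] at hin
    have : ⟪gradient f (u + τ • r), r⟫ - a - τ * b ≤ τ ^ 2 * c := by
      calc ⟪gradient f (u + τ • r), r⟫ - a - τ * b ≤ L * (τ * ‖r‖) ^ 2 * ‖r‖ := hin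
        _ = τ ^ 2 * c := by rw [hc]; ring
    linarith
  have h01 := hmono (Set.mem_Icc.mpr ⟨le_refl 0, zero_le_one⟩)
    (Set.mem_Icc.mpr ⟨zero_le_one, le_refl 1⟩) zero_le_one
  have hq0 : q 0 = 0 := by simp [hq]
  have hq1 : q 1 = f u + a + 1 / 2 * b + 1 / 3 * c - f v := by
    have hv : u + r = v := by rw [hr]; abel
    simp [hq, hv]
  rw [hq0, hq1] at h01
  have : L / 3 * ‖r‖ ^ 3 = 1 / 3 * c := by rw [hc]; ring
  rw [this]
  linarith

end AuxTaylor

-- arithmetic helpers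
lemma p_mono {x y : ℝ} (hx : 0 ≤ x) (hxy : x ≤ y) :
    x * Real.sqrt x ≤ y * Real.sqrt y :=
  mul_le_mul hxy (Real.sqrt_le_sqrt hxy) (Real.sqrt_nonneg x) (hx.trans hxy)

lemma sqrt_two_le : Real.sqrt 2 ≤ 3 / 2 := by
  nlinarith [Real.sq_sqrt (show (0:ℝ) ≤ 2 by norm_num), Real.sqrt_nonneg 2]

lemma p_add {a b : ℝ} (ha : 0 ≤ a) (hb : 0 ≤ b) :
    (a + b) * Real.sqrt (a + b) ≤ 3 * (a * Real.sqrt a + b * Real.sqrt b) := by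
  have key : ∀ u v : ℝ, 0 ≤ u → 0 ≤ v → u ≤ v →
      (u + v) * Real.sqrt (u + v) ≤ 3 * (u * Real.sqrt u + v * Real.sqrt v) := by
    intro u v hu hv huv
    have h1 : (u + v) * Real.sqrt (u + v) ≤ (2 * v) * Real.sqrt (2 * v) :=
      p_mono (by linarith) (by linarith)
    have h2 : Real.sqrt (2 * v) = Real.sqrt 2 * Real.sqrt v := Real.sqrt_mul (by norm_num) v
    have h3 : (2 * v) * (Real.sqrt 2 * Real.sqrt v) ≤ 3 * (v * Real.sqrt v) := by
      nlinarith [sqrt_two_le, Real.sqrt_nonneg v, mul_nonneg hv (Real.sqrt_nonneg v)]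
    have h4 : 0 ≤ u * Real.sqrt u := mul_nonneg hu (Real.sqrt_nonneg u)
    calc (u + v) * Real.sqrt (u + v) ≤ (2 * v) * Real.sqrt (2 * v) := h1
      _ = (2 * v) * (Real.sqrt 2 * Real.sqrt v) := by rw [h2]
      _ ≤ 3 * (v * Real.sqrt v) := h3
      _ ≤ 3 * (u * Real.sqrt u + v * Real.sqrt v) := by linarith
  rcases le_total a b with hab | hab
  · exact key a b ha hb hab
  · have := key b a hb ha hab
    calc (a + b) * Real.sqrt (a + b) = (b + a) * Real.sqrt (b + a) := by rw [add_comm]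
      _ ≤ 3 * (b * Real.sqrt b + a * Real.sqrt a) := this
      _ = 3 * (a * Real.sqrt a + b * Real.sqrt b) := by ring

lemma cube_sqrt {x : ℝ} (hx : 0 ≤ x) : Real.sqrt (x ^ 3) = x * Real.sqrt x := by
  rw [pow_succ, Real.sqrt_mul (by positivity), Real.sqrt_sq hx]

lemma amgm_sqrt {A B μ : ℝ} (hA : 0 ≤ A) (hB : 0 ≤ B) (hμ : 0 < μ) :
    Real.sqrt A * Real.sqrt B ≤ A / (2 * μ) + μ * B / 2 := by
  have h1 : 0 ≤ (Real.sqrt A - μ * Real.sqrt B) ^ 2 := sq_nonneg _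
  have h2 : Real.sqrt A ^ 2 = A := Real.sq_sqrt hA
  have h3 : Real.sqrt B ^ 2 = B := Real.sq_sqrt hB
  have h4 : 2 * μ * (Real.sqrt A * Real.sqrt B) ≤ A + μ ^ 2 * B := by nlinarith
  rw [div_add_div _ _ (by positivity : (2:ℝ) * μ ≠ 0) (by norm_num : (2:ℝ) ≠ 0)]
  rw [le_div_iff₀ (by positivity : (0:ℝ) < 2 * μ * 2)]
  nlinarith

lemma cube_add_le {a b : ℝ} (ha : 0 ≤ a) (hb : 0 ≤ b) : (a + b) ^ 3 ≤ 4 * a ^ 3 + 4 * b ^ 3 := by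
  nlinarith [mul_nonneg (sq_nonneg (a - b)) (add_nonneg ha hb)]

lemma ab2_le {a b : ℝ} (ha : 0 ≤ a) (hb : 0 ≤ b) : a * b ^ 2 ≤ a ^ 3 / 3 + 2 / 3 * b ^ 3 := by
  nlinarith [mul_nonneg (sq_nonneg (a - b)) (add_nonneg ha (by linarith : (0:ℝ) ≤ 2 * b))]

lemma young1 {δ R σ : ℝ} (hδ : 0 ≤ δ) (hR : 0 ≤ R) (hσ : 0 < σ) :
    1 / 2 * δ * R ^ 2 ≤ 50 / 3 * (δ ^ 3 / σ ^ 2) + σ / 30 * R ^ 3 := by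
  have key : 3 * σ ^ 2 * δ * R ^ 2 ≤ 100 * δ ^ 3 + σ ^ 3 / 5 * R ^ 3 := by
    nlinarith [mul_nonneg (sq_nonneg (10 * δ - σ * R))
      (by positivity : (0:ℝ) ≤ 10 * δ + 2 * σ * R)]
  have : (50 / 3 * (δ ^ 3 / σ ^ 2) + σ / 30 * R ^ 3) - 1 / 2 * δ * R ^ 2
      = (100 * δ ^ 3 + σ ^ 3 / 5 * R ^ 3 - 3 * σ ^ 2 * δ * R ^ 2) / (6 * σ ^ 2) := by
    field_simp; ring
  have h2 : 0 ≤ (100 * δ ^ 3 + σ ^ 3 / 5 * R ^ 3 - 3 * σ ^ 2 * δ * R ^ 2) / (6 * σ ^ 2) :=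
    div_nonneg (by linarith) (by positivity)
  linarith

lemma rpow_three_halves {x : ℝ} (hx : 0 < x) :
    x ^ ((3:ℝ) / 2) = x * Real.sqrt x := by
  rw [show (3:ℝ)/2 = 1 + 1/2 by norm_num, Real.rpow_add hx, Real.rpow_one,
    Real.sqrt_eq_rpow]

lemma kappa_cube : (((2:ℝ)/3) ^ ((1:ℝ)/3)) ^ (3:ℕ) = 2/3 := by
  rw [← Real.rpow_natCast (((2:ℝ)/3) ^ ((1:ℝ)/3)) 3, ← Real.rpow_mul (by norm_num)]
  norm_num

lemma kappa_ge : (87:ℝ)/100 ≤ ((2:ℝ)/3) ^ ((1:ℝ)/3) := by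
  have h0 : (0:ℝ) ≤ ((2:ℝ)/3) ^ ((1:ℝ)/3) := Real.rpow_nonneg (by norm_num) _
  have h3 : (((2:ℝ)/3) ^ ((1:ℝ)/3)) ^ (3:ℕ) = 2/3 := kappa_cube
  nlinarith [sq_nonneg (((2:ℝ)/3) ^ ((1:ℝ)/3) - 87/100), sq_nonneg (((2:ℝ)/3) ^ ((1:ℝ)/3) + 87/100)]

set_option maxHeartbeats 1600000 in
/-- Lemma 7 of the paper: guarantee for a block of `m` inexact cubic Newton
steps with a lazy finite-difference Hessian approximation computed at the anchor point `x 0`: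
either some iterate has (sub)gradient norm at most `ε`, or the block makes functional progress
at least `m·ε^{3/2}/(2·192·σ^{1/2})`. -/
theorem stmt_10 {n : ℕ} (hn : 1 ≤ n)
    (f ψ : EuclideanSpace ℝ (Fin n) → ℝ) (Q : Set (EuclideanSpace ℝ (Fin n)))
    (L : ℝ) (hL : 0 ≤ L)
    (hf : ContDiff ℝ 2 f)
    (hLip : ∀ u v : EuclideanSpace ℝ (Fin n),
      ‖fderiv ℝ (gradient f) v - fderiv ℝ (gradient f) u‖ ≤ L * ‖v - u‖)
    (hQconv : Convex ℝ Q) (hψconv : ConvexOn ℝ Q ψ)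
    (hFbdd : BddBelow (Set.range fun y => f y + ψ y))
    (ε : ℝ) (hε : 0 < ε) (m : ℕ) (hm : 1 ≤ m)
    (x : ℕ → EuclideanSpace ℝ (Fin n)) (hxQ : ∀ t ≤ m, x t ∈ Q)
    (σ h : ℝ)
    (hσ : σ ≥ 2 ^ 4 * ((2 : ℝ) / 3) ^ ((1 : ℝ) / 3) * m * L)
    (hh : 0 < h)
    (hhle : h ≤ (3 * σ ^ ((3 : ℝ) / 2) * ε ^ ((3 : ℝ) / 2)
      / (2 ^ 7 * 192 * (n : ℝ) ^ ((3 : ℝ) / 2) * L ^ 3)) ^ ((1 : ℝ) / 3))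
    (B : EuclideanSpace ℝ (Fin n) →L[ℝ] EuclideanSpace ℝ (Fin n))
    (hBsym : ∀ u v : EuclideanSpace ℝ (Fin n), ⟪B u, v⟫ = ⟪u, B v⟫)
    (hB : ‖B - fderiv ℝ (gradient f) (x 0)‖ ≤ Real.sqrt n * L / 2 * h)
    (ψ' : ℕ → EuclideanSpace ℝ (Fin n))
    (hψ' : ∀ t < m, ∀ y : EuclideanSpace ℝ (Fin n),
      ψ (x (t + 1)) + ⟪ψ' (t + 1), y - x (t + 1)⟫ ≤ ψ y)
    (hdec : ∀ t < m,
      f (x t) + ⟪gradient f (x t), x (t + 1) - x t⟫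
        + 1 / 2 * ⟪B (x (t + 1) - x t), x (t + 1) - x t⟫
        + σ / 6 * ‖x (t + 1) - x t‖ ^ 3 + ψ (x (t + 1)) ≤ f (x t) + ψ (x t))
    (hmodel : ∀ t < m,
      ‖gradient f (x t) + B (x (t + 1) - x t)
          + (σ / 2 * ‖x (t + 1) - x t‖) • (x (t + 1) - x t) + ψ' (t + 1)‖ ≤
        σ / 4 * ‖x (t + 1) - x t‖ ^ 2) :
    (∃ t, 1 ≤ t ∧ t ≤ m ∧ ‖gradient f (x t) + ψ' t‖ ≤ ε) ∨
      (f (x 0) + ψ (x 0)) - (f (x m) + ψ (x m)) ≥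
        m * ε ^ ((3 : ℝ) / 2) / (2 * 192 * Real.sqrt σ) := by
  rcases eq_or_lt_of_le hL with hL0 | hLpos
  · exfalso
    have hz : (3 * σ ^ ((3:ℝ)/2) * ε ^ ((3:ℝ)/2)
        / (2 ^ 7 * 192 * (n : ℝ) ^ ((3:ℝ)/2) * L ^ 3)) = 0 := by
      rw [← hL0]; norm_num
    rw [hz, Real.zero_rpow (by norm_num : (1:ℝ)/3 ≠ 0)] at hhle
    linarith
  have hn0 : (0:ℝ) < n := by exact_mod_cast hn
  have hm1 : (1:ℝ) ≤ (m:ℝ) := by exact_mod_cast hm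
  have hκge := kappa_ge
  have hκ3 := kappa_cube
  have hσ' : 2 ^ 4 * ((2:ℝ)/3) ^ ((1:ℝ)/3) * m * L ≤ σ := hσ
  have hmLpos : 0 < (m:ℝ) * L := mul_pos (by linarith) hLpos
  have hκmL : 87/100 * ((m:ℝ)*L) ≤ ((2:ℝ)/3) ^ ((1:ℝ)/3) * ((m:ℝ)*L) :=
    mul_le_mul_of_nonneg_right hκge hmLpos.le
  have hσpos : 0 < σ := lt_of_lt_of_le (by nlinarith) hσ'
  have hmL : (m:ℝ) * L ≤ 9/125 * σ := by nlinarith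
  have hL9 : L ≤ 9/125 * σ := by
    have hLm : L ≤ (m:ℝ) * L := le_mul_of_one_le_left hL hm1
    linarith
  have hmL3 : (m:ℝ)^3 * L^3 ≤ 3/8192 * σ^3 := by
    have h1 : (2 ^ 4 * ((2:ℝ)/3) ^ ((1:ℝ)/3) * m * L)^3 ≤ σ^3 :=
      pow_le_pow_left₀ (by positivity) hσ' 3
    have h2 : (2 ^ 4 * ((2:ℝ)/3) ^ ((1:ℝ)/3) * (m:ℝ) * L)^3
        = 4096 * (((2:ℝ)/3) ^ ((1:ℝ)/3))^(3:ℕ) * ((m:ℝ)^3 * L^3) := by ring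
    rw [h2, hκ3] at h1
    linarith
  have hsσpos : 0 < Real.sqrt σ := Real.sqrt_pos.mpr hσpos
  have hsσ2 : Real.sqrt σ * Real.sqrt σ = σ := Real.mul_self_sqrt hσpos.le
  have hsεpos : 0 < Real.sqrt ε := Real.sqrt_pos.mpr hε
  -- rewrite hhle and extract the δ³ bound
  rw [rpow_three_halves hσpos, rpow_three_halves hε, rpow_three_halves hn0] at hhle
  have hcube : h^3 ≤ 3 * (σ * Real.sqrt σ) * (ε * Real.sqrt ε)
      / (2^7*192*((n:ℝ) * Real.sqrt n)*L^3) := by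
    have hZnn : (0:ℝ) ≤ 3 * (σ * Real.sqrt σ) * (ε * Real.sqrt ε)
        / (2^7*192*((n:ℝ) * Real.sqrt n)*L^3) := by positivity
    have h1 := pow_le_pow_left₀ hh.le hhle 3
    rwa [← Real.rpow_natCast (_ ^ ((1:ℝ)/3)) 3, ← Real.rpow_mul hZnn,
      show (1:ℝ)/3*((3:ℕ):ℝ) = 1 by norm_num, Real.rpow_one] at h1
  set δ : ℝ := Real.sqrt n * L / 2 * h with hδdef
  have hδpos : 0 < δ := by
    have h1 : 0 < Real.sqrt n := Real.sqrt_pos.mpr hn0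
    rw [hδdef]; positivity
  have hδ3 : δ^3 ≤ σ * Real.sqrt σ * (ε * Real.sqrt ε) / 65536 := by
    have hs3 : (Real.sqrt n)^3 = (n:ℝ) * Real.sqrt n := by
      rw [pow_succ, Real.sq_sqrt hn0.le]
    have he : δ^3 = (n:ℝ) * Real.sqrt n * L^3 / 8 * h^3 := by
      rw [hδdef, show (Real.sqrt (n:ℝ) * L / 2 * h)^3
        = (Real.sqrt (n:ℝ))^3 * L^3 / 8 * h^3 by ring, hs3]
    have hc2 := mul_le_mul_of_nonneg_left hcube
      (show (0:ℝ) ≤ (n:ℝ) * Real.sqrt n * L^3 / 8 by positivity)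
    have heq : (n:ℝ) * Real.sqrt n * L^3 / 8 * (3 * (σ * Real.sqrt σ) * (ε * Real.sqrt ε)
        / (2^7*192*((n:ℝ) * Real.sqrt n)*L^3)) = σ * Real.sqrt σ * (ε * Real.sqrt ε) / 65536 := by
      have h1 : ((n:ℝ) * Real.sqrt n) ≠ 0 := by positivity
      have h2 : L^3 ≠ 0 := by positivity
      field_simp
      ring
    rw [he]
    rw [heq] at hc2
    exact hc2
  -- main case split
  by_cases hcase : ∃ t, 1 ≤ t ∧ t ≤ m ∧ ‖gradient f (x t) + ψ' t‖ ≤ ε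
  · exact Or.inl hcase
  right
  push_neg at hcase
  -- abbreviations
  set R : ℕ → ℝ := fun t => ‖x (t+1) - x t‖ with hRdef
  have hRnn : ∀ t, 0 ≤ R t := fun t => norm_nonneg _
  set W : ℕ → ℝ := fun t => ∑ s ∈ Finset.range t, R s with hWdef
  have hWnn : ∀ t, 0 ≤ W t := fun t => Finset.sum_nonneg (fun s _ => hRnn s)
  set S : ℝ := ∑ t ∈ Finset.range m, R t ^ 3 with hSdef
  have hSnn : 0 ≤ S := Finset.sum_nonneg (fun t _ => by positivity)
  -- Hessian approximation error along the trajectory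
  have hDb : ∀ t, ‖B - fderiv ℝ (gradient f) (x t)‖ ≤ δ + L * W t := by
    intro t
    have h1 : ‖B - fderiv ℝ (gradient f) (x t)‖ ≤ ‖B - fderiv ℝ (gradient f) (x 0)‖ +
        ‖fderiv ℝ (gradient f) (x 0) - fderiv ℝ (gradient f) (x t)‖ := by
      rw [show B - fderiv ℝ (gradient f) (x t) = (B - fderiv ℝ (gradient f) (x 0))
        + (fderiv ℝ (gradient f) (x 0) - fderiv ℝ (gradient f) (x t)) by abel]
      exact norm_add_le _ _
    have h2 : ‖fderiv ℝ (gradient f) (x 0) - fderiv ℝ (gradient f) (x t)‖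
        ≤ L * ‖x 0 - x t‖ := hLip (x t) (x 0)
    have h3 : ‖x 0 - x t‖ ≤ W t := by
      rw [norm_sub_rev]
      have h4 : x t - x 0 = ∑ s ∈ Finset.range t, (x (s+1) - x s) :=
        (Finset.sum_range_sub x t).symm
      rw [h4]
      exact norm_sum_le _ _
    have h5 : L * ‖x 0 - x t‖ ≤ L * W t := mul_le_mul_of_nonneg_left h3 hL
    linarith
  -- per-step progress bound
  have hP : ∀ t < m, (σ/6 - L/3) * R t ^ 3 - 1/2 * ((δ + L * W t) * R t ^ 2)
      ≤ (f (x t) + ψ (x t)) - (f (x (t+1)) + ψ (x (t+1))) := by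
    intro t ht
    have hd : f (x t) + ⟪gradient f (x t), x (t + 1) - x t⟫
        + 1 / 2 * ⟪B (x (t + 1) - x t), x (t + 1) - x t⟫
        + σ / 6 * R t ^ 3 + ψ (x (t + 1)) ≤ f (x t) + ψ (x t) := hdec t ht
    have ht2 : f (x (t+1)) ≤ f (x t) + ⟪gradient f (x t), x (t+1) - x t⟫
        + 1 / 2 * ⟪fderiv ℝ (gradient f) (x t) (x (t+1) - x t), x (t+1) - x t⟫
        + L / 3 * R t ^ 3 := aux_T2 hL hf hLip (x t) (x (t+1))
    have hip : ⟪fderiv ℝ (gradient f) (x t) (x (t+1) - x t), x (t+1) - x t⟫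
        - ⟪B (x (t+1) - x t), x (t+1) - x t⟫ ≤ (δ + L * W t) * R t ^ 2 := by
      have e1 : ⟪fderiv ℝ (gradient f) (x t) (x (t+1) - x t) - B (x (t+1) - x t),
          x (t+1) - x t⟫ = ⟪fderiv ℝ (gradient f) (x t) (x (t+1) - x t), x (t+1) - x t⟫
          - ⟪B (x (t+1) - x t), x (t+1) - x t⟫ := inner_sub_left _ _ _
      have e2 : ⟪fderiv ℝ (gradient f) (x t) (x (t+1) - x t) - B (x (t+1) - x t),
          x (t+1) - x t⟫ ≤ ‖fderiv ℝ (gradient f) (x t) (x (t+1) - x t)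
          - B (x (t+1) - x t)‖ * ‖x (t+1) - x t‖ := real_inner_le_norm _ _
      have e3 : fderiv ℝ (gradient f) (x t) (x (t+1) - x t) - B (x (t+1) - x t)
          = (fderiv ℝ (gradient f) (x t) - B) (x (t+1) - x t) := rfl
      have e4 : ‖(fderiv ℝ (gradient f) (x t) - B) (x (t+1) - x t)‖
          ≤ ‖fderiv ℝ (gradient f) (x t) - B‖ * ‖x (t+1) - x t‖ :=
        ContinuousLinearMap.le_opNorm _ _
      have e5 : ‖fderiv ℝ (gradient f) (x t) - B‖ = ‖B - fderiv ℝ (gradient f) (x t)‖ :=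
        norm_sub_rev _ _
      have e6 := hDb t
      have e7 : ‖fderiv ℝ (gradient f) (x t) - B‖ * ‖x (t+1) - x t‖
          ≤ (δ + L * W t) * R t := by
        rw [e5]
        exact mul_le_mul_of_nonneg_right e6 (norm_nonneg _)
      rw [← e1]
      calc ⟪fderiv ℝ (gradient f) (x t) (x (t+1) - x t) - B (x (t+1) - x t), x (t+1) - x t⟫
          ≤ ‖fderiv ℝ (gradient f) (x t) (x (t+1) - x t) - B (x (t+1) - x t)‖
            * ‖x (t+1) - x t‖ := e2
        _ ≤ ((δ + L * W t) * R t) * R t := by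
            rw [e3]
            exact mul_le_mul_of_nonneg_right (e4.trans e7) (norm_nonneg _)
        _ = (δ + L * W t) * R t ^ 2 := by ring
    set IA : ℝ := ⟪gradient f (x t), x (t + 1) - x t⟫ with hIA
    set IB : ℝ := ⟪B (x (t + 1) - x t), x (t + 1) - x t⟫ with hIB
    set IH : ℝ := ⟪fderiv ℝ (gradient f) (x t) (x (t + 1) - x t), x (t + 1) - x t⟫ with hIH
    linarith
  -- per-step gradient bound
  have hGs : ∀ t < m, ε ≤ (L + 3*σ/4) * R t ^ 2 + (δ + L * W t) * R t := by
    intro t ht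
    have hmod : ‖gradient f (x t) + B (x (t + 1) - x t)
        + (σ / 2 * ‖x (t + 1) - x t‖) • (x (t + 1) - x t) + ψ' (t + 1)‖ ≤
        σ / 4 * R t ^ 2 := hmodel t ht
    have hεN : ε < ‖gradient f (x (t+1)) + ψ' (t+1)‖ :=
      hcase (t+1) (by omega) (by omega)
    have ht1 : ‖gradient f (x (t+1)) - gradient f (x t)
        - fderiv ℝ (gradient f) (x t) (x (t+1) - x t)‖ ≤ L * R t ^ 2 :=
      aux_T1 hL hf hLip (x t) (x (t+1))
    have hA2 : ‖fderiv ℝ (gradient f) (x t) (x (t+1) - x t) - B (x (t+1) - x t)‖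
        ≤ (δ + L * W t) * R t := by
      have e3 : fderiv ℝ (gradient f) (x t) (x (t+1) - x t) - B (x (t+1) - x t)
          = (fderiv ℝ (gradient f) (x t) - B) (x (t+1) - x t) := rfl
      rw [e3]
      calc ‖(fderiv ℝ (gradient f) (x t) - B) (x (t+1) - x t)‖
          ≤ ‖fderiv ℝ (gradient f) (x t) - B‖ * ‖x (t+1) - x t‖ :=
            ContinuousLinearMap.le_opNorm _ _
        _ ≤ (δ + L * W t) * R t := by
            rw [norm_sub_rev]
            exact mul_le_mul_of_nonneg_right (hDb t) (norm_nonneg _)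
    have hA4 : ‖(σ / 2 * ‖x (t + 1) - x t‖) • (x (t + 1) - x t)‖ = σ/2 * R t ^ 2 := by
      rw [norm_smul, Real.norm_eq_abs, abs_of_nonneg (by positivity)]
      show σ / 2 * R t * R t = σ / 2 * R t ^ 2
      ring
    have hdecomp : gradient f (x (t+1)) + ψ' (t+1) =
        (gradient f (x (t+1)) - gradient f (x t)
          - fderiv ℝ (gradient f) (x t) (x (t+1) - x t))
        + (fderiv ℝ (gradient f) (x t) (x (t+1) - x t) - B (x (t+1) - x t))
        + (gradient f (x t) + B (x (t + 1) - x t)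
          + (σ / 2 * ‖x (t + 1) - x t‖) • (x (t + 1) - x t) + ψ' (t + 1))
        - (σ / 2 * ‖x (t + 1) - x t‖) • (x (t + 1) - x t) := by abel
    have hn1 : ‖gradient f (x (t+1)) + ψ' (t+1)‖
        ≤ L * R t ^ 2 + (δ + L * W t) * R t + σ/4 * R t ^ 2 + σ/2 * R t ^ 2 := by
      rw [hdecomp]
      have g1 := norm_sub_le ((gradient f (x (t+1)) - gradient f (x t)
          - fderiv ℝ (gradient f) (x t) (x (t+1) - x t))
        + (fderiv ℝ (gradient f) (x t) (x (t+1) - x t) - B (x (t+1) - x t))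
        + (gradient f (x t) + B (x (t + 1) - x t)
          + (σ / 2 * ‖x (t + 1) - x t‖) • (x (t + 1) - x t) + ψ' (t + 1)))
        ((σ / 2 * ‖x (t + 1) - x t‖) • (x (t + 1) - x t))
      have g2 := norm_add_le ((gradient f (x (t+1)) - gradient f (x t)
          - fderiv ℝ (gradient f) (x t) (x (t+1) - x t))
        + (fderiv ℝ (gradient f) (x t) (x (t+1) - x t) - B (x (t+1) - x t)))
        (gradient f (x t) + B (x (t + 1) - x t)
          + (σ / 2 * ‖x (t + 1) - x t‖) • (x (t + 1) - x t) + ψ' (t + 1))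
      have g3 := norm_add_le (gradient f (x (t+1)) - gradient f (x t)
          - fderiv ℝ (gradient f) (x t) (x (t+1) - x t))
        (fderiv ℝ (gradient f) (x t) (x (t+1) - x t) - B (x (t+1) - x t))
      rw [hA4] at g1
      linarith
    set NN : ℝ := ‖gradient f (x (t+1)) + ψ' (t+1)‖ with hNN
    linarith
  -- power-mean bound on W
  have keyW : ∀ t < m, W t ^ 3 ≤ (m:ℝ)^2 * S := by
    intro t ht
    rcases Nat.eq_zero_or_pos t with rfl | htpos
    · have hW0 : W 0 = 0 := by simp [hWdef]
      rw [hW0]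
      simpa using mul_nonneg (sq_nonneg (m:ℝ)) hSnn
    · have hps := pow_sum_div_card_le_sum_pow (s := Finset.range t) (f := R)
        (fun s _ => hRnn s) 2
      rw [Finset.card_range] at hps
      have ht2 : (0:ℝ) < (t:ℝ)^2 := by
        have : (0:ℝ) < (t:ℝ) := by exact_mod_cast htpos
        positivity
      have h1 : W t ^ (2+1) ≤ (t:ℝ)^2 * ∑ s ∈ Finset.range t, R s ^ (2+1) := by
        have := (div_le_iff₀ ht2).mp hps
        calc W t ^ (2+1) = (∑ s ∈ Finset.range t, R s) ^ (2+1) := by rw [hWdef]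
          _ ≤ (∑ s ∈ Finset.range t, R s ^ (2+1)) * (t:ℝ)^2 := this
          _ = (t:ℝ)^2 * ∑ s ∈ Finset.range t, R s ^ (2+1) := by ring
      have h2 : ∑ s ∈ Finset.range t, R s ^ 3 ≤ S :=
        Finset.sum_le_sum_of_subset_of_nonneg
          (Finset.range_subset_range.mpr ht.le) (fun i _ _ => by positivity)
      have h3 : (t:ℝ)^2 ≤ (m:ℝ)^2 := by
        have h4 : (t:ℝ) ≤ (m:ℝ) := by exact_mod_cast ht.le
        have h5 : (0:ℝ) ≤ (t:ℝ) := by positivity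
        nlinarith
      have h6 : (0:ℝ) ≤ ∑ s ∈ Finset.range t, R s ^ 3 :=
        Finset.sum_nonneg (fun s _ => by positivity)
      calc W t ^ 3 = W t ^ (2+1) := by norm_num
        _ ≤ (t:ℝ)^2 * ∑ s ∈ Finset.range t, R s ^ (2+1) := h1
        _ = (t:ℝ)^2 * ∑ s ∈ Finset.range t, R s ^ 3 := by norm_num
        _ ≤ (m:ℝ)^2 * S := mul_le_mul h3 h2 h6 (by positivity)
  -- the per-step cubic lower bound from the gradient bound
  have hGs3 : ∀ t < m, ε * Real.sqrt ε * (σ * Real.sqrt σ)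
      ≤ 64/25 * σ^3 * R t ^ 3 + 150 * δ^3 + 150 * L^3 * (m:ℝ)^2 * S := by
    intro t ht
    have h0 := hGs t ht
    have hDnn : 0 ≤ δ + L * W t := by
      have := mul_nonneg hL (hWnn t)
      linarith
    have ha : 0 ≤ (L + 3*σ/4) * R t ^ 2 :=
      mul_nonneg (by linarith) (by positivity)
    have hb : 0 ≤ (δ + L * W t) * R t := mul_nonneg hDnn (hRnn t)
    have step1 : ε * Real.sqrt ε ≤ ((L + 3*σ/4) * R t ^ 2 + (δ + L * W t) * R t)
        * Real.sqrt ((L + 3*σ/4) * R t ^ 2 + (δ + L * W t) * R t) := p_mono hε.le h0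
    have step2 := p_add ha hb
    -- bound the first p-term
    have step3 : ((L + 3*σ/4) * R t ^ 2) * Real.sqrt ((L + 3*σ/4) * R t ^ 2)
        ≤ (5/6*σ*R t ^ 2) * Real.sqrt (5/6*σ*R t ^ 2) :=
      p_mono ha (mul_le_mul_of_nonneg_right (by linarith) (by positivity))
    have hsq : Real.sqrt (5/6*σ*R t ^ 2) = Real.sqrt (5/6*σ) * R t := by
      rw [show 5/6*σ*R t ^ 2 = (5/6*σ)*(R t)^2 by ring,
        Real.sqrt_mul (by positivity), Real.sqrt_sq (hRnn t)]
    have step4 : (5/6*σ*R t ^ 2) * Real.sqrt (5/6*σ*R t ^ 2) ≤ 5/6*(σ*Real.sqrt σ)*R t ^ 3 := by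
      rw [hsq]
      have hle : Real.sqrt (5/6*σ) ≤ Real.sqrt σ := Real.sqrt_le_sqrt (by linarith)
      have h7 : (5/6*σ*R t ^ 2) * (Real.sqrt (5/6*σ) * R t)
          ≤ (5/6*σ*R t ^ 2) * (Real.sqrt σ * R t) :=
        mul_le_mul_of_nonneg_left
          (mul_le_mul_of_nonneg_right hle (hRnn t)) (by positivity)
      have h8 : (5/6*σ*R t ^ 2) * (Real.sqrt σ * R t) = 5/6*(σ*Real.sqrt σ)*R t ^ 3 := by ring
      linarith
    -- second p-term as product of square roots
    have step5 : ((δ + L * W t) * R t) * Real.sqrt ((δ + L * W t) * R t)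
        = Real.sqrt ((δ + L * W t)^3) * Real.sqrt (R t ^ 3) := by
      rw [← Real.sqrt_mul (by positivity) (R t ^ 3),
        show (δ + L * W t)^3 * R t ^ 3 = ((δ + L * W t) * R t)^3 by ring,
        cube_sqrt hb]
    have hchain : ε * Real.sqrt ε ≤ 5/2*(σ*Real.sqrt σ)*R t ^ 3
        + 3*(Real.sqrt ((δ + L * W t)^3) * Real.sqrt (R t ^ 3)) := by
      rw [step5] at step2
      linarith
    -- multiply by σ√σ and use AM-GM
    have hupos : (0:ℝ) < σ * Real.sqrt σ := by positivity
    have hs3' : σ * Real.sqrt σ * (σ * Real.sqrt σ) = σ^3 := by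
      rw [show σ * Real.sqrt σ * (σ * Real.sqrt σ)
        = σ^2 * (Real.sqrt σ * Real.sqrt σ) by ring, hsσ2]
      ring
    have hamgm : Real.sqrt ((δ + L * W t)^3) * Real.sqrt (R t ^ 3) * (σ * Real.sqrt σ)
        ≤ 25*((δ + L * W t)^3)/2 + (σ * Real.sqrt σ)^2*(R t ^ 3)/50 := by
      have h := amgm_sqrt (show (0:ℝ) ≤ (δ + L * W t)^3 by positivity)
        (show (0:ℝ) ≤ R t ^ 3 by positivity)
        (show (0:ℝ) < σ * Real.sqrt σ/25 by positivity)
      have h2 := mul_le_mul_of_nonneg_right h hupos.le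
      have heq : ((δ + L * W t)^3 / (2 * (σ * Real.sqrt σ/25))
          + (σ * Real.sqrt σ/25) * (R t ^ 3) / 2) * (σ * Real.sqrt σ)
          = 25*((δ + L * W t)^3)/2 + (σ * Real.sqrt σ)^2*(R t ^ 3)/50 := by
        field_simp
        ring
      rw [heq] at h2
      exact h2
    have hcube3 : (δ + L * W t)^3 ≤ 4*δ^3 + 4*L^3*((m:ℝ)^2*S) := by
      have h9 := cube_add_le hδpos.le (mul_nonneg hL (hWnn t))
      have h10 : (L * W t)^3 = L^3 * W t ^ 3 := by ring
      have h11 : L^3 * W t ^ 3 ≤ L^3 * ((m:ℝ)^2*S) :=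
        mul_le_mul_of_nonneg_left (keyW t ht) (by positivity)
      linarith [h9, h10 ▸ h11]
    have hmul := mul_le_mul_of_nonneg_right hchain hupos.le
    have he1 : (5/2*(σ*Real.sqrt σ)*R t ^ 3
        + 3*(Real.sqrt ((δ + L * W t)^3) * Real.sqrt (R t ^ 3))) * (σ * Real.sqrt σ)
        = 5/2*σ^3*R t ^ 3
          + 3*(Real.sqrt ((δ + L * W t)^3) * Real.sqrt (R t ^ 3) * (σ * Real.sqrt σ)) := by
      rw [show (5/2*(σ*Real.sqrt σ)*R t ^ 3
        + 3*(Real.sqrt ((δ + L * W t)^3) * Real.sqrt (R t ^ 3))) * (σ * Real.sqrt σ)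
        = 5/2*(σ * Real.sqrt σ * (σ * Real.sqrt σ))*R t ^ 3
          + 3*(Real.sqrt ((δ + L * W t)^3) * Real.sqrt (R t ^ 3) * (σ * Real.sqrt σ)) by ring,
        hs3']
    have he2 : (σ * Real.sqrt σ)^2 = σ^3 := by
      rw [pow_two, hs3']
    rw [he1] at hmul
    rw [he2] at hamgm
    linarith [hamgm, hcube3, hmul]
  -- sum of the gradient bounds
  have hGsum : (m:ℝ) * (ε * Real.sqrt ε * (σ * Real.sqrt σ))
      ≤ 64/25*σ^3*S + (m:ℝ)*(150*δ^3) + (m:ℝ)*(150*L^3*(m:ℝ)^2*S) := by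
    have h1 : ∑ _t ∈ Finset.range m, (ε * Real.sqrt ε * (σ * Real.sqrt σ))
        ≤ ∑ t ∈ Finset.range m,
          (64/25 * σ^3 * R t ^ 3 + 150 * δ^3 + 150 * L^3 * (m:ℝ)^2 * S) :=
      Finset.sum_le_sum (fun t ht => hGs3 t (Finset.mem_range.mp ht))
    rw [Finset.sum_const, Finset.card_range, nsmul_eq_mul] at h1
    have h2 : ∑ t ∈ Finset.range m,
        (64/25 * σ^3 * R t ^ 3 + 150 * δ^3 + 150 * L^3 * (m:ℝ)^2 * S)
        = 64/25*σ^3*S + (m:ℝ)*(150*δ^3) + (m:ℝ)*(150*L^3*(m:ℝ)^2*S) := by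
      rw [Finset.sum_add_distrib, Finset.sum_add_distrib, Finset.sum_const,
        Finset.sum_const, Finset.card_range, ← Finset.mul_sum, nsmul_eq_mul, nsmul_eq_mul,
        hSdef]
    rw [h2] at h1
    exact h1
  -- pairwise bound for the cross terms
  have key1 : ∑ t ∈ Finset.range m, (W t * R t ^ 2) ≤ (m:ℝ) * S := by
    have per : ∀ t ∈ Finset.range m, W t * R t ^ 2 ≤ S/3 + 2*(m:ℝ)/3 * R t ^ 3 := by
      intro t htm
      rw [Finset.mem_range] at htm
      have e1 : W t * R t ^ 2 = ∑ s ∈ Finset.range t, R s * R t ^ 2 := by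
        rw [hWdef]
        exact Finset.sum_mul _ _ _
      have e2 : ∑ s ∈ Finset.range t, R s * R t ^ 2
          ≤ ∑ s ∈ Finset.range t, (R s ^ 3/3 + 2/3*R t ^ 3) :=
        Finset.sum_le_sum (fun s _ => ab2_le (hRnn s) (hRnn t))
      have e3 : ∑ s ∈ Finset.range t, (R s ^ 3/3 + 2/3*R t ^ 3)
          = (∑ s ∈ Finset.range t, R s ^ 3)/3 + (t:ℝ)*(2/3*R t ^ 3) := by
        rw [Finset.sum_add_distrib, Finset.sum_const, Finset.card_range,
          ← Finset.sum_div, nsmul_eq_mul]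
      have e4 : (∑ s ∈ Finset.range t, R s ^ 3) ≤ S :=
        Finset.sum_le_sum_of_subset_of_nonneg
          (Finset.range_subset_range.mpr htm.le) (fun i _ _ => by positivity)
      have e5 : (t:ℝ) ≤ (m:ℝ) := by exact_mod_cast htm.le
      have e6 : (t:ℝ)*(2/3*R t ^ 3) ≤ (m:ℝ)*(2/3*R t ^ 3) :=
        mul_le_mul_of_nonneg_right e5 (by positivity)
      rw [e1]
      calc ∑ s ∈ Finset.range t, R s * R t ^ 2
          ≤ ∑ s ∈ Finset.range t, (R s ^ 3/3 + 2/3*R t ^ 3) := e2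
        _ = (∑ s ∈ Finset.range t, R s ^ 3)/3 + (t:ℝ)*(2/3*R t ^ 3) := e3
        _ ≤ S/3 + 2*(m:ℝ)/3 * R t ^ 3 := by linarith
    calc ∑ t ∈ Finset.range m, (W t * R t ^ 2)
        ≤ ∑ t ∈ Finset.range m, (S/3 + 2*(m:ℝ)/3 * R t ^ 3) := Finset.sum_le_sum per
      _ = (m:ℝ)*(S/3) + 2*(m:ℝ)/3 * S := by
          rw [Finset.sum_add_distrib, Finset.sum_const, Finset.card_range,
            ← Finset.mul_sum, nsmul_eq_mul, hSdef]
      _ = (m:ℝ) * S := by ring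
  -- sum of the progress bounds
  have hPsum : 11/150*σ*S - (m:ℝ)*(50/3*(δ^3/σ^2))
      ≤ (f (x 0) + ψ (x 0)) - (f (x m) + ψ (x m)) := by
    have tel : ∑ t ∈ Finset.range m,
        ((f (x t) + ψ (x t)) - (f (x (t+1)) + ψ (x (t+1))))
        = (f (x 0) + ψ (x 0)) - (f (x m) + ψ (x m)) :=
      Finset.sum_range_sub' (fun t => f (x t) + ψ (x t)) m
    have per2 : ∀ t ∈ Finset.range m,
        (σ/6 - L/3 - σ/30)*R t ^ 3 - 50/3*(δ^3/σ^2) - L/2*(W t * R t ^ 2)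
        ≤ (f (x t) + ψ (x t)) - (f (x (t+1)) + ψ (x (t+1))) := by
      intro t htm
      have h1 := hP t (Finset.mem_range.mp htm)
      have hy := young1 hδpos.le (hRnn t) hσpos
      linarith [hy, h1]
    have hsum := Finset.sum_le_sum per2
    rw [tel] at hsum
    have hsum2 : ∑ t ∈ Finset.range m,
        ((σ/6 - L/3 - σ/30)*R t ^ 3 - 50/3*(δ^3/σ^2) - L/2*(W t * R t ^ 2))
        = (σ/6 - L/3 - σ/30)*S - (m:ℝ)*(50/3*(δ^3/σ^2))
          - L/2*(∑ t ∈ Finset.range m, (W t * R t ^ 2)) := by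
      rw [Finset.sum_sub_distrib, Finset.sum_sub_distrib, Finset.sum_const,
        Finset.card_range, ← Finset.mul_sum, ← Finset.mul_sum, nsmul_eq_mul, hSdef]
    rw [hsum2] at hsum
    have h3 : L/2*(∑ t ∈ Finset.range m, (W t * R t ^ 2)) ≤ L/2*((m:ℝ)*S) :=
      mul_le_mul_of_nonneg_left key1 (by linarith)
    have h4 : L*S ≤ 9/125*σ*S := by linarith [mul_le_mul_of_nonneg_right hL9 hSnn]
    have h5 : (m:ℝ)*L*S ≤ 9/125*σ*S := by linarith [mul_le_mul_of_nonneg_right hmL hSnn]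
    linarith [hsum, h3, h4, h5]
  -- final combination
  have hPnn : (0:ℝ) ≤ (m:ℝ) * (ε * Real.sqrt ε) := by positivity
  have hs3' : σ * Real.sqrt σ * (σ * Real.sqrt σ) = σ^3 := by
    rw [show σ * Real.sqrt σ * (σ * Real.sqrt σ)
      = σ^2 * (Real.sqrt σ * Real.sqrt σ) by ring, hsσ2]
    ring
  have hmδ : (m:ℝ)*δ^3 ≤ (m:ℝ)*(σ * Real.sqrt σ * (ε * Real.sqrt ε)/65536) :=
    mul_le_mul_of_nonneg_left hδ3 (by positivity)
  have hmul3 : (m:ℝ)^3*L^3*S ≤ 3/8192*σ^3*S := by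
    linarith [mul_le_mul_of_nonneg_right hmL3 hSnn]
  have huP : (0:ℝ) ≤ (σ * Real.sqrt σ)*((m:ℝ)*(ε * Real.sqrt ε)) := by positivity
  have hσ3S : (0:ℝ) ≤ σ^3*S := by positivity
  have g2 : 33/1200*((σ * Real.sqrt σ)*((m:ℝ)*(ε * Real.sqrt ε))) ≤ 11/150*(σ^3*S) := by
    linarith [hGsum, hmδ, hmul3, huP, hσ3S]
  have hPσ : 11/150*(σ^3*S) - 50/3*((m:ℝ)*δ^3)
      ≤ ((f (x 0) + ψ (x 0)) - (f (x m) + ψ (x m)))*σ^2 := by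
    have h1 := mul_le_mul_of_nonneg_right hPsum (sq_nonneg σ)
    have heq : (11/150*σ*S - (m:ℝ)*(50/3*(δ^3/σ^2)))*σ^2
        = 11/150*(σ^3*S) - 50/3*((m:ℝ)*δ^3) := by
      field_simp
    linarith [heq ▸ h1]
  have h50 : 50/3*((m:ℝ)*δ^3)
      ≤ 50/196608*((σ * Real.sqrt σ)*((m:ℝ)*(ε * Real.sqrt ε))) := by
    linarith [hmδ]
  have htσ : 1/40*((σ * Real.sqrt σ)*((m:ℝ)*(ε * Real.sqrt ε)))
      ≤ ((f (x 0) + ψ (x 0)) - (f (x m) + ψ (x m)))*σ^2 := by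
    linarith
  have hTs : 1/40*((m:ℝ)*(ε * Real.sqrt ε))
      ≤ ((f (x 0) + ψ (x 0)) - (f (x m) + ψ (x m)))*Real.sqrt σ := by
    have h1 := mul_le_mul_of_nonneg_right htσ hsσpos.le
    have e1 : 1/40*((σ * Real.sqrt σ)*((m:ℝ)*(ε * Real.sqrt ε)))*Real.sqrt σ
        = 1/40*((m:ℝ)*(ε * Real.sqrt ε))*σ^2 := by
      rw [show 1/40*((σ * Real.sqrt σ)*((m:ℝ)*(ε * Real.sqrt ε)))*Real.sqrt σ
        = 1/40*((m:ℝ)*(ε * Real.sqrt ε))*(σ*(Real.sqrt σ*Real.sqrt σ)) by ring, hsσ2]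
      ring
    have e2 : ((f (x 0) + ψ (x 0)) - (f (x m) + ψ (x m)))*σ^2*Real.sqrt σ
        = ((f (x 0) + ψ (x 0)) - (f (x m) + ψ (x m)))*Real.sqrt σ*σ^2 := by ring
    have h2 : 1/40*((m:ℝ)*(ε * Real.sqrt ε))*σ^2
        ≤ ((f (x 0) + ψ (x 0)) - (f (x m) + ψ (x m)))*Real.sqrt σ*σ^2 := by
      rw [← e1, ← e2]
      exact h1
    exact le_of_mul_le_mul_right h2 (by positivity)
  rw [ge_iff_le, rpow_three_halves hε,
    div_le_iff₀ (by positivity : (0:ℝ) < 2 * 192 * Real.sqrt σ)]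
  linarith [hTs, hPnn]
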